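/- arXiv:2504.07255 — 5 statements merged into one kernel-verified Lean document; each statement's English description precedes it below -/
import Mathlib

section
/- Let A(x) = −f(‖x‖²)x on ℝ^d with f ∈ C¹(ℝ₊, ℝ). If −f(r) − 2r f'(r) ≤ L for all r ≥ 0, then A satisfies the one-sided Lipschitz condition ⟨A(x)−A(y), x−y⟩ ≤ L‖x−y‖² for all x, y ∈ ℝ^d. -/
open Real RealInnerProductSpace

/-- Auxiliary: from the combined bound we deduce `-f r ≤ L` on `[0, ∞)`. -/
lemma aux_neg_f_le (f f' : ℝ → ℝ)
    (hf : ∀ r ∈ Set.Ici (0:ℝ), HasDerivWithinAt f (f' r) (Set.Ici 0) r)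
    (L : ℝ) (hL : ∀ r : ℝ, 0 ≤ r → -f r - 2 * r * f' r ≤ L) :
    ∀ r : ℝ, 0 ≤ r → -f r ≤ L := by
  intro r hr
  rcases eq_or_lt_of_le hr with h0 | hpos
  · have := hL r hr
    rw [← h0] at this ⊢
    simpa using this
  -- consider g(r) = √r * (f r + L), monotone on Ici 0
  set g : ℝ → ℝ := fun s => Real.sqrt s * (f s + L) with hg
  have hfc : ContinuousOn f (Set.Ici 0) := fun s hs => (hf s hs).continuousWithinAt
  have hgc : ContinuousOn g (Set.Ici 0) :=
    (Real.continuous_sqrt.continuousOn).mul (hfc.add continuousOn_const)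
  have hgd : ∀ s ∈ Set.Ioi (0:ℝ), HasDerivAt g
      ((f s + L) / (2 * Real.sqrt s) + Real.sqrt s * f' s) s := by
    intro s hs
    have hs0 : (0:ℝ) < s := hs
    have h1 : HasDerivAt Real.sqrt (1 / (2 * Real.sqrt s)) s :=
      Real.hasDerivAt_sqrt (ne_of_gt hs0)
    have h2 : HasDerivAt f (f' s) s :=
      (hf s (le_of_lt hs0)).hasDerivAt (Ici_mem_nhds hs0)
    have h3 : HasDerivAt (fun u => f u + L) (f' s) s := h2.add_const L
    have := h1.mul h3
    exact this.congr_deriv (by ring)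
  have hmono : MonotoneOn g (Set.Ici 0) := by
    apply monotoneOn_of_deriv_nonneg (convex_Ici 0) hgc
    · intro s hs
      rw [interior_Ici] at hs
      exact (hgd s hs).differentiableAt.differentiableWithinAt
    · intro s hs
      rw [interior_Ici] at hs
      rw [(hgd s hs).deriv]
      have hs0 : (0:ℝ) < s := hs
      have hsq : (0:ℝ) < Real.sqrt s := Real.sqrt_pos.2 hs0
      have key : 0 ≤ f s + L + 2 * s * f' s := by
        have := hL s (le_of_lt hs0); linarith
      have hss : Real.sqrt s * Real.sqrt s = s := Real.mul_self_sqrt hs0.le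
      have h2s : (2 * Real.sqrt s) ≠ 0 := by positivity
      have : (f s + L) / (2 * Real.sqrt s) + Real.sqrt s * f' s
          = (f s + L + 2 * s * f' s) / (2 * Real.sqrt s) := by
        rw [div_add' _ _ _ h2s]
        congr 1
        linear_combination 2 * f' s * hss
      rw [this]
      positivity
  have h0 : g 0 ≤ g r := hmono (Set.mem_Ici.2 (le_refl (0:ℝ))) (Set.mem_Ici.2 hr) (le_of_lt hpos)
  have hg0 : g 0 = 0 := by simp [hg]
  have hsq : (0:ℝ) < Real.sqrt r := Real.sqrt_pos.2 hpos
  have : 0 ≤ f r + L := by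
    by_contra hneg
    push_neg at hneg
    have : g r < 0 := mul_neg_of_pos_of_neg hsq hneg
    linarith [h0, hg0.symm ▸ h0]
  linarith

theorem stmt_8 (d : ℕ) (f f' : ℝ → ℝ)
    (hf : ∀ r ∈ Set.Ici (0:ℝ), HasDerivWithinAt f (f' r) (Set.Ici 0) r)
    (hf'c : ContinuousOn f' (Set.Ici 0))
    (L : ℝ)
    (hL : ∀ r : ℝ, 0 ≤ r → -f r - 2 * r * f' r ≤ L)
    (A : EuclideanSpace ℝ (Fin d) → EuclideanSpace ℝ (Fin d))
    (hA : ∀ x, A x = -f (‖x‖ ^ 2) • x) :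
    ∀ x y : EuclideanSpace ℝ (Fin d), ⟪A x - A y, x - y⟫ ≤ L * ‖x - y‖ ^ 2 := by
  intro x y
  have hnegf := aux_neg_f_le f f' hf L hL
  set v : EuclideanSpace ℝ (Fin d) := x - y with hv
  -- the quadratic q t = ‖y + t v‖²
  set q : ℝ → ℝ := fun t => ‖y‖ ^ 2 + 2 * t * ⟪y, v⟫ + t ^ 2 * ‖v‖ ^ 2 with hq
  have hq_eq : ∀ t : ℝ, q t = ‖y + t • v‖ ^ 2 := by
    intro t
    rw [hq]
    simp only
    rw [norm_add_sq_real, real_inner_smul_right, norm_smul, Real.norm_eq_abs,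
      mul_pow, sq_abs]
    ring
  have hq_nonneg : ∀ t, 0 ≤ q t := by
    intro t; rw [hq_eq t]; positivity
  -- ip t = ⟪y + t v, v⟫
  set ip : ℝ → ℝ := fun t => ⟪y, v⟫ + t * ‖v‖ ^ 2 with hip
  have hip_eq : ∀ t, ip t = ⟪y + t • v, v⟫ := by
    intro t
    rw [hip]
    simp only
    rw [inner_add_left, real_inner_smul_left, real_inner_self_eq_norm_sq]
  have hq' : ∀ t : ℝ, HasDerivAt q (2 * ip t) t := by
    intro t
    have h1 : HasDerivAt (fun u : ℝ => ‖y‖ ^ 2) 0 t := hasDerivAt_const t _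
    have h2 := ((hasDerivAt_id t).const_mul (2:ℝ)).mul_const (⟪y, v⟫)
    have h3 := (hasDerivAt_pow 2 t).mul_const (‖v‖ ^ 2)
    have hcomb := (h1.add h2).add h3
    refine HasDerivAt.congr_deriv hcomb ?_
    rw [hip]
    push_cast
    ring
  -- φ t = ⟪A (y + t v), v⟫ = -f (q t) * ip t
  set φ : ℝ → ℝ := fun t => -f (q t) * ip t with hφ
  have hφ' : ∀ t : ℝ, HasDerivAt φ
      (-(f' (q t) * (2 * ip t)) * ip t + -f (q t) * ‖v‖ ^ 2) t := by
    intro t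
    have hcomp : HasDerivAt (fun t => f (q t)) ((2 * ip t) * f' (q t)) t := by
      have := (hf (q t) (hq_nonneg t)).scomp_hasDerivAt t (hq' t) hq_nonneg
      exact this.congr_deriv (smul_eq_mul _ _)
    have h1 : HasDerivAt (fun t => -f (q t)) (-(f' (q t) * (2 * ip t))) t := by
      have := hcomp.neg
      exact this.congr_deriv (by ring)
    have h2 : HasDerivAt ip (‖v‖ ^ 2) t := by
      have := ((hasDerivAt_id t).mul_const (‖v‖ ^ 2)).const_add ⟪y, v⟫
      simpa [hip] using this
    exact h1.mul h2
  -- MVT on [0,1]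
  have hmvt := exists_hasDerivAt_eq_slope φ
      (fun t => -(f' (q t) * (2 * ip t)) * ip t + -f (q t) * ‖v‖ ^ 2)
      (by norm_num : (0:ℝ) < 1)
      (fun t _ => (hφ' t).continuousAt.continuousWithinAt)
      (fun t _ => hφ' t)
  obtain ⟨c, hc, hceq⟩ := hmvt
  -- identify ⟪A x - A y, v⟫ with φ 1 - φ 0
  have hφ1 : φ 1 = ⟪A x, v⟫ := by
    have hx1 : y + (1:ℝ) • v = x := by rw [hv]; simp
    rw [hφ]
    simp only
    rw [hip_eq, hq_eq, hx1, hA x, real_inner_smul_left]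
  have hφ0 : φ 0 = ⟪A y, v⟫ := by
    have hy0 : y + (0:ℝ) • v = y := by simp
    rw [hφ]
    simp only
    rw [hip_eq, hq_eq, hy0, hA y, real_inner_smul_left]
  have hsum : ⟪A x - A y, v⟫ = φ 1 - φ 0 := by
    rw [hφ1, hφ0, inner_sub_left]
  rw [hsum]
  have hslope : φ 1 - φ 0 = -(f' (q c) * (2 * ip c)) * ip c + -f (q c) * ‖v‖ ^ 2 := by
    have h := hceq
    rw [sub_zero, div_one] at h
    exact h.symm
  rw [hslope]
  -- now bound the derivative
  set r := q c with hr
  have hr0 : 0 ≤ r := hq_nonneg c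
  have hcs : (ip c) ^ 2 ≤ r * ‖v‖ ^ 2 := by
    rw [hip_eq, hr, hq_eq]
    have h := real_inner_mul_inner_self_le (y + c • v) v
    rw [real_inner_self_eq_norm_sq, real_inner_self_eq_norm_sq] at h
    rw [sq]
    exact h
  have hgoal : -(f' r * (2 * ip c)) * ip c + -f r * ‖v‖ ^ 2 ≤ L * ‖v‖ ^ 2 := by
    have hexpand : -(f' r * (2 * ip c)) * ip c + -f r * ‖v‖ ^ 2
        = -2 * f' r * (ip c) ^ 2 - f r * ‖v‖ ^ 2 := by ring
    rw [hexpand]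
    rcases le_or_gt (f' r) 0 with hle | hlt
    · -- f' r ≤ 0 : use s ≤ r V and the combined hypothesis
      have h1 : -2 * f' r * (ip c) ^ 2 ≤ -2 * f' r * (r * ‖v‖ ^ 2) :=
        mul_le_mul_of_nonneg_left hcs (by linarith)
      have h2 := hL r hr0
      nlinarith [sq_nonneg ‖v‖]
    · -- f' r > 0 : use s ≥ 0 and -f r ≤ L
      have h1 : -2 * f' r * (ip c) ^ 2 ≤ 0 := by nlinarith [sq_nonneg (ip c)]
      have h2 := hnegf r hr0
      nlinarith [sq_nonneg ‖v‖]
  exact hgoal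
end

section
/- Let n ∈ ℕ, b > 0, c ∈ ℝ with b ≠ 0, and A(x,y,z) the Lorenz-type drift (−x^{2n+1} − y² − z², −y^{2n+1} + xy − bxz, −z^{2n+1} + bxy + xz). Then for every L > 0, the determinant of [∇A(0,y,0)]_sym − L·Id tends to +∞ as |y| → ∞; consequently A does not satisfy the one-sided Lipschitz condition for any L. -/
open Real RealInnerProductSpace Filter

set_option maxHeartbeats 2000000 in
theorem stmt_11 (n : ℕ) (b c : ℝ) (hb : 0 < b)
    (A : EuclideanSpace ℝ (Fin 3) → EuclideanSpace ℝ (Fin 3))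
    (hA : ∀ v : EuclideanSpace ℝ (Fin 3),
      A v = (WithLp.equiv 2 (Fin 3 → ℝ)).symm
        ![-(v 0) ^ (2 * n + 1) - (v 1) ^ 2 - (v 2) ^ 2,
          -(v 1) ^ (2 * n + 1) + (v 0) * (v 1) - b * (v 0) * (v 2),
          -(v 2) ^ (2 * n + 1) + b * (v 0) * (v 1) + (v 0) * (v 2)])
    -- the Jacobian matrix of `A` at the point `(0, y, 0)`
    (J : ℝ → Matrix (Fin 3) (Fin 3) ℝ)
    (hJ : ∀ y : ℝ, ∀ i j : Fin 3,
      J y i j = fderiv ℝ A (EuclideanSpace.single 1 y) (EuclideanSpace.single j 1) i)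
    -- its symmetrization
    (S : ℝ → Matrix (Fin 3) (Fin 3) ℝ)
    (hS : ∀ y : ℝ, S y = (J y + Matrix.transpose (J y)) / 2) :
    (∀ L : ℝ, 0 < L →
      Filter.Tendsto (fun y : ℝ => (S y - L • (1 : Matrix (Fin 3) (Fin 3) ℝ)).det)
        (Filter.cocompact ℝ) Filter.atTop) ∧
    ¬ ∃ L : ℝ, ∀ u v : EuclideanSpace ℝ (Fin 3),
        ⟪A u - A v, u - v⟫ ≤ L * ‖u - v‖ ^ 2 := by
  -- the Jacobian at (0, y, 0)
  have hkey : ∀ y : ℝ, J y = Matrix.of ![![-((2*n+1:ℝ) * 0^(2*n)), -2*y, 0],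
                      ![y, -((2*n+1:ℝ) * y^(2*n)), 0],
                      ![b*y, 0, -((2*n+1:ℝ) * 0^(2*n))]] := by
    intro y
    set p : EuclideanSpace ℝ (Fin 3) := EuclideanSpace.single 1 y with hp
    have hp0 : p 0 = 0 := by simp [hp, EuclideanSpace.single_apply]
    have hp1 : p 1 = y := by simp [hp, EuclideanSpace.single_apply]
    have hp2 : p 2 = 0 := by simp [hp, EuclideanSpace.single_apply]
    have hproj : ∀ k : Fin 3, HasFDerivAt (fun v : EuclideanSpace ℝ (Fin 3) => v k)
        (EuclideanSpace.proj (𝕜 := ℝ) (ι := Fin 3) k) p := by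
      intro k
      exact (EuclideanSpace.proj (𝕜 := ℝ) (ι := Fin 3) k).hasFDerivAt
    have d0 := (((hasDerivAt_pow (2*n+1) (p 0)).comp_hasFDerivAt p (hproj 0)).neg.sub
        ((hasDerivAt_pow 2 (p 1)).comp_hasFDerivAt p (hproj 1))).sub
        ((hasDerivAt_pow 2 (p 2)).comp_hasFDerivAt p (hproj 2))
    have d1 := ((((hasDerivAt_pow (2*n+1) (p 1)).comp_hasFDerivAt p (hproj 1)).neg.add
        ((hproj 0).mul (hproj 1))).sub
        (((hproj 0).const_mul b).mul (hproj 2)))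
    have d2 := ((((hasDerivAt_pow (2*n+1) (p 2)).comp_hasFDerivAt p (hproj 2)).neg.add
        (((hproj 0).const_mul b).mul (hproj 1))).add
        ((hproj 0).mul (hproj 2)))
    set pr : Fin 3 → (EuclideanSpace ℝ (Fin 3) →L[ℝ] ℝ) := fun k => EuclideanSpace.proj k
      with hpr
    set D : Fin 3 → (EuclideanSpace ℝ (Fin 3) →L[ℝ] ℝ) :=
      ![-((↑(2 * n + 1) * p 0 ^ (2 * n + 1 - 1)) • pr 0) - (↑2 * p 1 ^ (2 - 1)) • pr 1 -
          (↑2 * p 2 ^ (2 - 1)) • pr 2,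
        -((↑(2 * n + 1) * p 1 ^ (2 * n + 1 - 1)) • pr 1) + (p 0 • pr 1 + p 1 • pr 0) -
          ((b * p 0) • pr 2 + p 2 • b • pr 0),
        -((↑(2 * n + 1) * p 2 ^ (2 * n + 1 - 1)) • pr 2) + ((b * p 0) • pr 1 + p 1 • b • pr 0) +
          (p 0 • pr 2 + p 2 • pr 0)] with hD
    set φ : Fin 3 → (EuclideanSpace ℝ (Fin 3) → ℝ) :=
      ![fun v => -(v 0) ^ (2 * n + 1) - (v 1) ^ 2 - (v 2) ^ 2,
        fun v => -(v 1) ^ (2 * n + 1) + (v 0) * (v 1) - b * (v 0) * (v 2),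
        fun v => -(v 2) ^ (2 * n + 1) + b * (v 0) * (v 1) + (v 0) * (v 2)] with hφ
    have dvec : HasFDerivAt (fun v (i : Fin 3) => φ i v) (ContinuousLinearMap.pi D) p := by
      rw [hasFDerivAt_pi]
      intro i
      fin_cases i
      · exact d0
      · exact d1
      · exact d2
    set T := (PiLp.continuousLinearEquiv 2 ℝ (fun _ : Fin 3 => ℝ)).symm with hT
    have hAfun : A = fun v => T (fun i => φ i v) := by
      funext v
      rw [hA]
      refine congrArg _ ?_
      funext i
      fin_cases i <;> rfl
    have hDA : HasFDerivAt A ((T : (Fin 3 → ℝ) →L[ℝ] EuclideanSpace ℝ (Fin 3)).comp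
        (ContinuousLinearMap.pi D)) p := by
      rw [hAfun]
      exact T.hasFDerivAt.comp p dvec
    have happ : ∀ (w : Fin 3 → ℝ) (k : Fin 3),
        ((T : (Fin 3 → ℝ) →L[ℝ] EuclideanSpace ℝ (Fin 3)) w) k = w k := fun _ _ => rfl
    ext i j
    rw [hJ y i j, hDA.fderiv]
    rw [ContinuousLinearMap.comp_apply, happ, ContinuousLinearMap.pi_apply]
    fin_cases i <;> fin_cases j <;>
      simp only [hD, hp0, hp1, hp2, Matrix.cons_val_zero, Matrix.cons_val_one, Matrix.head_cons,
        Matrix.cons_val_two, Matrix.tail_cons, Matrix.of_apply, Matrix.cons_val',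
        Matrix.empty_val', Matrix.cons_val_fin_one, Matrix.head_fin_const,
        ContinuousLinearMap.sub_apply, ContinuousLinearMap.add_apply,
        ContinuousLinearMap.neg_apply, ContinuousLinearMap.smul_apply, hpr,
        PiLp.proj_apply, EuclideanSpace.single_apply] <;>
      norm_num [Fin.ext_iff] <;> ring
  have hdiv : ∀ M : Matrix (Fin 3) (Fin 3) ℝ, M / 2 = (2⁻¹ : ℝ) • M := by
    intro M
    rw [div_eq_mul_inv]
    have h2 : (2 : Matrix (Fin 3) (Fin 3) ℝ)⁻¹ = (2⁻¹ : ℝ) • 1 := by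
      apply Matrix.inv_eq_right_inv
      ext i j
      simp [Matrix.mul_apply, Matrix.one_apply, Matrix.smul_apply, Fin.sum_univ_three,
        ← one_add_one_eq_two, Matrix.add_apply]
      split <;> norm_num
    rw [h2, Matrix.mul_smul, Matrix.mul_one]
  constructor
  · intro L hL
    set z : ℝ := (2*n+1:ℝ) * 0^(2*n) with hz
    have hz0 : 0 ≤ z := by positivity
    have hdet : ∀ y : ℝ, (S y - L • (1 : Matrix (Fin 3) (Fin 3) ℝ)).det =
        ((2*n+1:ℝ) * y^(2*n) + L) * (b^2*y^2/4 - (z+L)^2) + (z+L)*y^2/4 := by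
      intro y
      rw [hS, hkey, hdiv]
      simp only [Matrix.det_fin_three, Matrix.sub_apply, Matrix.smul_apply, Matrix.add_apply,
        Matrix.transpose_apply, Matrix.one_apply, smul_eq_mul, Matrix.of_apply,
        Matrix.cons_val', Matrix.cons_val_zero, Matrix.cons_val_one, Matrix.head_cons,
        Matrix.cons_val_two, Matrix.tail_cons, Matrix.empty_val', Matrix.cons_val_fin_one,
        Matrix.head_fin_const]
      norm_num [Fin.ext_iff]
      ring
    have hsq : Tendsto (fun y : ℝ => y^2) (cocompact ℝ) atTop := by
      have h1 := tendsto_norm_cocompact_atTop (E := ℝ)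
      have h2 := (tendsto_pow_atTop (n := 2) two_ne_zero).comp h1
      simpa [Function.comp_def, Real.norm_eq_abs, sq_abs] using h2
    have hlin : Tendsto (fun y : ℝ => L*b^2/4 * y^2 + (-(L*(z+L)^2))) (cocompact ℝ) atTop := by
      apply tendsto_atTop_add_const_right
      exact hsq.const_mul_atTop (by positivity)
    apply tendsto_atTop_mono' _ _ hlin
    have hev : ∀ᶠ y : ℝ in cocompact ℝ, 2*(z+L)/b ≤ ‖y‖ :=
      tendsto_norm_cocompact_atTop.eventually_ge_atTop _
    filter_upwards [hev] with y hy
    rw [hdet y]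
    have hb2 : (z+L)^2 ≤ b^2*y^2/4 := by
      have h1 : 0 ≤ (2*(z+L)/b) := by positivity
      have h2 : (2*(z+L)/b)^2 ≤ y^2 := by
        calc (2*(z+L)/b)^2 ≤ ‖y‖^2 := by nlinarith [abs_nonneg y]
        _ = y^2 := by rw [Real.norm_eq_abs, sq_abs]
      have h3 : (2*(z+L)/b)^2 = 4*(z+L)^2/b^2 := by ring
      rw [h3] at h2
      have hb2 : 0 < b^2 := by positivity
      rw [div_le_iff₀ hb2] at h2
      nlinarith
    have hw : 0 ≤ y^(2*n) := by
      rw [pow_mul]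
      positivity
    have hfac : L ≤ (2*n+1:ℝ) * y^(2*n) + L := by nlinarith
    nlinarith [mul_le_mul_of_nonneg_right hfac (by linarith : (0:ℝ) ≤ b^2*y^2/4 - (z+L)^2),
      mul_nonneg (by linarith : (0:ℝ) ≤ z+L) (by positivity : (0:ℝ) ≤ y^2/4)]
  · rintro ⟨L, h⟩
    set x : ℝ := L + 2 with hx
    set u : EuclideanSpace ℝ (Fin 3) := (WithLp.equiv 2 (Fin 3 → ℝ)).symm ![x, 1, 0] with hu
    set v : EuclideanSpace ℝ (Fin 3) := (WithLp.equiv 2 (Fin 3 → ℝ)).symm ![x, 0, 0] with hv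
    have hn := h u v
    rw [← real_inner_self_eq_norm_sq] at hn
    have hu0 : u 0 = x := rfl
    have hu1 : u 1 = 1 := rfl
    have hu2 : u 2 = 0 := rfl
    have hv0 : v 0 = x := rfl
    have hv1 : v 1 = 0 := rfl
    have hv2 : v 2 = 0 := rfl
    have hzero : (0:ℝ)^(2*n+1) = 0 := by
      exact zero_pow (by omega)
    rw [PiLp.inner_apply, PiLp.inner_apply] at hn
    simp only [Fin.sum_univ_three, PiLp.sub_apply, RCLike.inner_apply, conj_trivial,
      hA, WithLp.equiv_symm_apply, PiLp.toLp_apply, Matrix.cons_val_zero, Matrix.cons_val_one,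
      Matrix.head_cons, Matrix.cons_val_two, Matrix.tail_cons,
      hu0, hu1, hu2, hv0, hv1, hv2] at hn
    rw [hzero] at hn
    norm_num [hx] at hn
    linarith
end

section
/- The function m(x) = 1/(π(x⁴ − x² + 1)) is a probability density on ℝ, i.e. m ≥ 0 and ∫_ℝ m(x) dx = 1. -/
open Real MeasureTheory Filter Topology

noncomputable def F12 : ℝ → ℝ := fun x =>
  (Real.log (x ^ 2 + Real.sqrt 3 * x + 1) - Real.log (x ^ 2 - Real.sqrt 3 * x + 1))
    / (4 * Real.sqrt 3 * Real.pi)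
  + (Real.arctan (2 * x + Real.sqrt 3) + Real.arctan (2 * x - Real.sqrt 3)) / (2 * Real.pi)

lemma sq3 : Real.sqrt 3 ^ 2 = 3 := Real.sq_sqrt (by norm_num)

lemma u_pos (x : ℝ) : 0 < x ^ 2 + Real.sqrt 3 * x + 1 := by
  nlinarith [sq3, sq_nonneg (2 * x + Real.sqrt 3)]

lemma v_pos (x : ℝ) : 0 < x ^ 2 - Real.sqrt 3 * x + 1 := by
  nlinarith [sq3, sq_nonneg (2 * x - Real.sqrt 3)]

lemma q_pos (x : ℝ) : 0 < x ^ 4 - x ^ 2 + 1 := by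
  nlinarith [u_pos x, v_pos x, sq3]

lemma F12_deriv (x : ℝ) :
    HasDerivAt F12 (1 / (Real.pi * (x ^ 4 - x ^ 2 + 1))) x := by
  have hu := u_pos x
  have hv := v_pos x
  have hs3 : (0:ℝ) < Real.sqrt 3 := Real.sqrt_pos.mpr (by norm_num)
  have h1 : HasDerivAt (fun y : ℝ => y ^ 2 + Real.sqrt 3 * y + 1)
      (2 * x + Real.sqrt 3) x := by
    have := ((hasDerivAt_pow 2 x).add (((hasDerivAt_id x).const_mul (Real.sqrt 3)))).add_const 1
    simpa using this
  have h2 : HasDerivAt (fun y : ℝ => y ^ 2 - Real.sqrt 3 * y + 1)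
      (2 * x - Real.sqrt 3) x := by
    have := ((hasDerivAt_pow 2 x).sub (((hasDerivAt_id x).const_mul (Real.sqrt 3)))).add_const 1
    simpa using this
  have hlog1 : HasDerivAt (fun y : ℝ => Real.log (y ^ 2 + Real.sqrt 3 * y + 1))
      ((2 * x + Real.sqrt 3) / (x ^ 2 + Real.sqrt 3 * x + 1)) x := by
    simpa [div_eq_mul_inv, mul_comm] using h1.log hu.ne'
  have hlog2 : HasDerivAt (fun y : ℝ => Real.log (y ^ 2 - Real.sqrt 3 * y + 1))
      ((2 * x - Real.sqrt 3) / (x ^ 2 - Real.sqrt 3 * x + 1)) x := by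
    simpa [div_eq_mul_inv, mul_comm] using h2.log hv.ne'
  have ha1 : HasDerivAt (fun y : ℝ => Real.arctan (2 * y + Real.sqrt 3))
      ((1 + (2 * x + Real.sqrt 3) ^ 2)⁻¹ * 2) x := by
    have hl : HasDerivAt (fun y : ℝ => 2 * y + Real.sqrt 3) 2 x := by
      simpa using ((hasDerivAt_id x).const_mul (2:ℝ)).add_const (Real.sqrt 3)
    simpa [Function.comp_def, one_div] using (Real.hasDerivAt_arctan _).comp x hl
  have ha2 : HasDerivAt (fun y : ℝ => Real.arctan (2 * y - Real.sqrt 3))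
      ((1 + (2 * x - Real.sqrt 3) ^ 2)⁻¹ * 2) x := by
    have hl : HasDerivAt (fun y : ℝ => 2 * y - Real.sqrt 3) 2 x := by
      simpa using ((hasDerivAt_id x).const_mul (2:ℝ)).sub_const (Real.sqrt 3)
    simpa [Function.comp_def, one_div] using (Real.hasDerivAt_arctan _).comp x hl
  have h := ((hlog1.sub hlog2).div_const (4 * Real.sqrt 3 * Real.pi)).add
    ((ha1.add ha2).div_const (2 * Real.pi))
  refine h.congr_deriv ?_
  have hsum1 : 1 + (2 * x + Real.sqrt 3) ^ 2 = 4 * (x ^ 2 + Real.sqrt 3 * x + 1) := by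
    nlinarith [sq3]
  have hsum2 : 1 + (2 * x - Real.sqrt 3) ^ 2 = 4 * (x ^ 2 - Real.sqrt 3 * x + 1) := by
    nlinarith [sq3]
  have hq : x ^ 4 - x ^ 2 + 1
      = (x ^ 2 + Real.sqrt 3 * x + 1) * (x ^ 2 - Real.sqrt 3 * x + 1) := by
    nlinarith [sq3]
  rw [hsum1, hsum2, hq]
  have hpi := Real.pi_pos
  have hu2 : x * (x + Real.sqrt 3) + 1 ≠ 0 := by nlinarith
  have hv2 : x * (x - Real.sqrt 3) + 1 ≠ 0 := by nlinarith
  field_simp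
  ring_nf

lemma m_integrable : Integrable (fun x : ℝ => 1 / (Real.pi * (x ^ 4 - x ^ 2 + 1))) := by
  have h : Integrable (fun x : ℝ => (3 / Real.pi) * (1 + x ^ 2)⁻¹) :=
    integrable_inv_one_add_sq.const_mul _
  refine h.mono' ?_ ?_
  · apply Continuous.aestronglyMeasurable
    refine continuous_const.div (by continuity) (fun x => ?_)
    have := q_pos x; positivity
  · filter_upwards with x
    have hq := q_pos x
    have hpi := Real.pi_pos
    have h0 : (0:ℝ) < 1 + x ^ 2 := by positivity
    rw [Real.norm_eq_abs, abs_of_nonneg (by positivity)]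
    have key : 1 / (Real.pi * (x ^ 4 - x ^ 2 + 1)) ≤ 3 / (Real.pi * (1 + x ^ 2)) := by
      rw [div_le_div_iff₀ (by positivity) (by positivity)]
      have h1 : (1:ℝ) + x ^ 2 ≤ 3 * (x ^ 4 - x ^ 2 + 1) := by
        nlinarith [sq_nonneg (x ^ 2 - 1), sq_nonneg x]
      nlinarith [mul_le_mul_of_nonneg_left h1 hpi.le]
    calc 1 / (Real.pi * (x ^ 4 - x ^ 2 + 1)) ≤ 3 / (Real.pi * (1 + x ^ 2)) := key
    _ = 3 / Real.pi * (1 + x ^ 2)⁻¹ := by field_simp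

lemma ratio_tendsto_top :
    Tendsto (fun x : ℝ => (x ^ 2 + Real.sqrt 3 * x + 1) / (x ^ 2 - Real.sqrt 3 * x + 1))
      atTop (𝓝 1) := by
  have hg : ContinuousAt
      (fun t : ℝ => (1 + Real.sqrt 3 * t + t ^ 2) / (1 - Real.sqrt 3 * t + t ^ 2)) 0 := by
    apply ContinuousAt.div (by fun_prop) (by fun_prop)
    norm_num
  have h0 : Tendsto (fun x : ℝ => x⁻¹) atTop (𝓝 0) := tendsto_inv_atTop_zero
  have h := (hg.tendsto.comp h0)
  simp only [Function.comp_def] at h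
  norm_num at h
  apply h.congr'
  filter_upwards [eventually_gt_atTop (0:ℝ)] with x hx
  have hx0 : x ≠ 0 := hx.ne'
  have hd : (0:ℝ) < 1 - Real.sqrt 3 * x⁻¹ + x⁻¹ ^ 2 := by nlinarith [v_pos x⁻¹]
  rw [← inv_pow]
  show (1 + Real.sqrt 3 * x⁻¹ + x⁻¹ ^ 2) / (1 - Real.sqrt 3 * x⁻¹ + x⁻¹ ^ 2)
      = (x ^ 2 + Real.sqrt 3 * x + 1) / (x ^ 2 - Real.sqrt 3 * x + 1)
  rw [div_eq_div_iff hd.ne' (v_pos x).ne']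
  field_simp

lemma ratio_tendsto_bot :
    Tendsto (fun x : ℝ => (x ^ 2 + Real.sqrt 3 * x + 1) / (x ^ 2 - Real.sqrt 3 * x + 1))
      atBot (𝓝 1) := by
  have hg : ContinuousAt
      (fun t : ℝ => (1 + Real.sqrt 3 * t + t ^ 2) / (1 - Real.sqrt 3 * t + t ^ 2)) 0 := by
    apply ContinuousAt.div (by fun_prop) (by fun_prop)
    norm_num
  have h0 : Tendsto (fun x : ℝ => x⁻¹) atBot (𝓝 0) := by
    have := (tendsto_inv_atTop_zero (𝕜 := ℝ)).comp tendsto_neg_atBot_atTop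
    have h2 := this.neg
    simp only [Function.comp] at h2
    norm_num at h2
    simpa [inv_neg] using h2
  have h := (hg.tendsto.comp h0)
  simp only [Function.comp_def] at h
  norm_num at h
  apply h.congr'
  filter_upwards [eventually_lt_atBot (0:ℝ)] with x hx
  have hx0 : x ≠ 0 := hx.ne
  have hd : (0:ℝ) < 1 - Real.sqrt 3 * x⁻¹ + x⁻¹ ^ 2 := by nlinarith [v_pos x⁻¹]
  rw [← inv_pow]
  show (1 + Real.sqrt 3 * x⁻¹ + x⁻¹ ^ 2) / (1 - Real.sqrt 3 * x⁻¹ + x⁻¹ ^ 2)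
      = (x ^ 2 + Real.sqrt 3 * x + 1) / (x ^ 2 - Real.sqrt 3 * x + 1)
  rw [div_eq_div_iff hd.ne' (v_pos x).ne']
  field_simp

lemma log_part_eq (x : ℝ) :
    Real.log (x ^ 2 + Real.sqrt 3 * x + 1) - Real.log (x ^ 2 - Real.sqrt 3 * x + 1)
      = Real.log ((x ^ 2 + Real.sqrt 3 * x + 1) / (x ^ 2 - Real.sqrt 3 * x + 1)) :=
  (Real.log_div (u_pos x).ne' (v_pos x).ne').symm

lemma F12_top : Tendsto F12 atTop (𝓝 (1 / 2)) := by
  have hpi := Real.pi_pos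
  have hs3 : (0:ℝ) < Real.sqrt 3 := Real.sqrt_pos.mpr (by norm_num)
  have hlog : Tendsto (fun x : ℝ =>
      Real.log (x ^ 2 + Real.sqrt 3 * x + 1) - Real.log (x ^ 2 - Real.sqrt 3 * x + 1))
      atTop (𝓝 0) := by
    have := ((Real.continuousAt_log one_ne_zero).tendsto.comp ratio_tendsto_top)
    simp only [Function.comp_def, Real.log_one] at this
    simpa [log_part_eq] using this
  have hlin1 : Tendsto (fun x : ℝ => 2 * x + Real.sqrt 3) atTop atTop :=
    tendsto_atTop_add_const_right _ _ (tendsto_id.const_mul_atTop (by norm_num))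
  have hlin2 : Tendsto (fun x : ℝ => 2 * x - Real.sqrt 3) atTop atTop :=
    tendsto_atTop_add_const_right _ _ (tendsto_id.const_mul_atTop (by norm_num))
  have ha1 : Tendsto (fun x : ℝ => Real.arctan (2 * x + Real.sqrt 3)) atTop (𝓝 (π / 2)) :=
    (tendsto_nhds_of_tendsto_nhdsWithin Real.tendsto_arctan_atTop).comp hlin1
  have ha2 : Tendsto (fun x : ℝ => Real.arctan (2 * x - Real.sqrt 3)) atTop (𝓝 (π / 2)) :=
    (tendsto_nhds_of_tendsto_nhdsWithin Real.tendsto_arctan_atTop).comp hlin2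
  have h := (hlog.div_const (4 * Real.sqrt 3 * Real.pi)).add
    ((ha1.add ha2).div_const (2 * Real.pi))
  have : (0:ℝ) / (4 * Real.sqrt 3 * Real.pi) + (π / 2 + π / 2) / (2 * Real.pi) = 1 / 2 := by
    rw [zero_div, zero_add, div_eq_iff (by positivity)]; ring
  rwa [this] at h

lemma F12_bot : Tendsto F12 atBot (𝓝 (-(1 / 2))) := by
  have hpi := Real.pi_pos
  have hlog : Tendsto (fun x : ℝ =>
      Real.log (x ^ 2 + Real.sqrt 3 * x + 1) - Real.log (x ^ 2 - Real.sqrt 3 * x + 1))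
      atBot (𝓝 0) := by
    have := ((Real.continuousAt_log one_ne_zero).tendsto.comp ratio_tendsto_bot)
    simp only [Function.comp_def, Real.log_one] at this
    simpa [log_part_eq] using this
  have hlin1 : Tendsto (fun x : ℝ => 2 * x + Real.sqrt 3) atBot atBot :=
    tendsto_atBot_add_const_right _ _ (tendsto_id.const_mul_atBot (by norm_num))
  have hlin2 : Tendsto (fun x : ℝ => 2 * x - Real.sqrt 3) atBot atBot :=
    tendsto_atBot_add_const_right _ _ (tendsto_id.const_mul_atBot (by norm_num))
  have ha1 : Tendsto (fun x : ℝ => Real.arctan (2 * x + Real.sqrt 3)) atBot (𝓝 (-(π / 2))) :=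
    (tendsto_nhds_of_tendsto_nhdsWithin Real.tendsto_arctan_atBot).comp hlin1
  have ha2 : Tendsto (fun x : ℝ => Real.arctan (2 * x - Real.sqrt 3)) atBot (𝓝 (-(π / 2))) :=
    (tendsto_nhds_of_tendsto_nhdsWithin Real.tendsto_arctan_atBot).comp hlin2
  have h := (hlog.div_const (4 * Real.sqrt 3 * Real.pi)).add
    ((ha1.add ha2).div_const (2 * Real.pi))
  have : (0:ℝ) / (4 * Real.sqrt 3 * Real.pi) + (-(π / 2) + -(π / 2)) / (2 * Real.pi)
      = -(1 / 2) := by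
    rw [zero_div, zero_add, div_eq_iff (by positivity)]; ring
  rwa [this] at h

theorem stmt_12 (m : ℝ → ℝ) (hm : ∀ x, m x = 1 / (Real.pi * (x ^ 4 - x ^ 2 + 1))) :
    (∀ x, 0 ≤ m x) ∧ ∫ x : ℝ, m x = 1 := by
  constructor
  · intro x
    rw [hm x]
    have hq := q_pos x
    have hpi := Real.pi_pos
    positivity
  · simp only [hm]
    rw [MeasureTheory.integral_of_hasDerivAt_of_tendsto F12_deriv m_integrable F12_bot F12_top]
    norm_num
end

section
/- If X has density m(x) = 1/(π(x⁴ − x² + 1)) on ℝ, then E|X|^{1/2} = ∫_ℝ |x|^{1/2} m(x) dx = √(2/3), and E|X|^{3/2} = √(2/3), and E|X|^{5/2} = 2√(2/3). -/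
open Real MeasureTheory Set

lemma betaReal (s : ℝ) (h0 : 0 < s) (h1 : s < 1) :
    ∫ t in Ioo (0:ℝ) 1, t ^ (s-1) * (1-t) ^ (-s) = π / Real.sin (π * s) := by
  have hre : (0:ℝ) < (s:ℂ).re := by simpa using h0
  have hre2 : (0:ℝ) < ((1:ℂ) - s).re := by simp [Complex.sub_re]; linarith
  have hb := Complex.Gamma_mul_Gamma_eq_betaIntegral hre hre2
  rw [show (s:ℂ) + (1 - s) = 1 by ring, Complex.Gamma_one, one_mul] at hb
  rw [Complex.Gamma_mul_Gamma_one_sub (s:ℂ)] at hb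
  rw [Complex.betaIntegral] at hb
  have key : (∫ (x : ℝ) in (0:ℝ)..1, (x:ℂ) ^ ((s:ℂ) - 1) * ((1:ℂ) - x) ^ ((1:ℂ) - s - 1))
      = ((∫ t in Ioo (0:ℝ) 1, t ^ (s-1) * (1-t) ^ (-s) : ℝ) : ℂ) := by
    rw [intervalIntegral.integral_of_le zero_le_one, ← MeasureTheory.integral_Ioc_eq_integral_Ioo]
    rw [setIntegral_congr_fun measurableSet_Ioc
      (show EqOn (fun x : ℝ => (x:ℂ) ^ ((s:ℂ) - 1) * ((1:ℂ) - x) ^ ((1:ℂ) - s - 1))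
        (fun x : ℝ => ((x ^ (s-1) * (1-x) ^ (-s) : ℝ) : ℂ)) (Ioc 0 1) from ?_)]
    · exact integral_ofReal
    · intro x hx
      obtain ⟨hx0, hx1⟩ := hx
      have e1 : ((x:ℝ) ^ (s-1) : ℝ) = ((x:ℂ) ^ ((s:ℂ) - 1) : ℂ) := by
        rw [Complex.ofReal_cpow hx0.le]; push_cast; ring_nf
      have e2 : (((1-x:ℝ)) ^ (-s) : ℝ) = (((1:ℂ) - x) ^ ((1:ℂ) - s - 1) : ℂ) := by
        rw [Complex.ofReal_cpow (by linarith : (0:ℝ) ≤ 1 - x)]; push_cast; ring_nf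
      simp only [Complex.ofReal_mul, e1, e2]
  rw [key] at hb
  have : ((π / Real.sin (π * s) : ℝ) : ℂ) = ↑π / Complex.sin (↑π * ↑s) := by
    push_cast [Complex.ofReal_sin]; ring_nf
  rw [← this] at hb
  exact_mod_cast hb.symm

lemma mellin_one_add (s : ℝ) (h0 : 0 < s) (h1 : s < 1) :
    ∫ y in Ioi (0:ℝ), y ^ (s-1) / (1 + y) = ∫ t in Ioo (0:ℝ) 1, t ^ (s-1) * (1-t) ^ (-s) := by
  have himg : (fun t : ℝ => t / (1 - t)) '' Ioo 0 1 = Ioi 0 := by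
    ext y; simp only [mem_image, mem_Ioo, mem_Ioi]
    constructor
    · rintro ⟨t, ⟨ht0, ht1⟩, rfl⟩
      exact div_pos ht0 (by linarith)
    · intro hy
      refine ⟨y / (1 + y), ⟨div_pos hy (by linarith), ?_⟩, ?_⟩
      · rw [div_lt_one (by linarith)]; linarith
      · field_simp; ring
  have hderiv : ∀ t ∈ Ioo (0:ℝ) 1, HasDerivWithinAt (fun t : ℝ => t / (1 - t))
      (((1 - t) ^ 2)⁻¹) (Ioo 0 1) t := by
    intro t ht
    have h1t : (1:ℝ) - t ≠ 0 := by have := ht.2; intro h; linarith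
    have := (hasDerivAt_id t).div ((hasDerivAt_const t 1).sub (hasDerivAt_id t)) h1t
    refine HasDerivAt.hasDerivWithinAt ?_
    convert this using 1
    · rfl
    · ext x; simp
    · simp only [Pi.sub_apply, id_eq]; ring
  have hinj : InjOn (fun t : ℝ => t / (1 - t)) (Ioo 0 1) := by
    intro a ha b hb hab
    have ha1 : (1:ℝ) - a ≠ 0 := by have := ha.2; intro h; linarith
    have hb1 : (1:ℝ) - b ≠ 0 := by have := hb.2; intro h; linarith
    field_simp at hab
    nlinarith [hab]
  rw [← himg, integral_image_eq_integral_abs_deriv_smul measurableSet_Ioo hderiv hinj]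
  refine setIntegral_congr_fun measurableSet_Ioo fun t ht => ?_
  obtain ⟨ht0, ht1⟩ := ht
  have ha : (0:ℝ) < 1 - t := by linarith
  have h1 : (1:ℝ) + t / (1 - t) = (1 - t)⁻¹ := by field_simp; ring
  have h2 : (t / (1 - t)) ^ (s - 1) = t ^ (s-1) * (1-t) ^ (1-s) := by
    rw [Real.div_rpow ht0.le ha.le, div_eq_mul_inv, ← Real.rpow_neg ha.le, neg_sub]
  have h3 : |((1 - t) ^ 2)⁻¹| = ((1-t) ^ (2:ℕ))⁻¹ := by
    rw [abs_inv, abs_of_nonneg (by positivity)]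
  simp only [smul_eq_mul, h1, h2, h3]
  rw [div_eq_mul_inv, inv_inv]
  have h4 : ((1-t) ^ (2:ℕ))⁻¹ = (1-t) ^ (-2:ℝ) := by
    rw [← Real.rpow_natCast (1-t) 2, ← Real.rpow_neg ha.le]; norm_num
  rw [h4]
  have h5 : (1-t:ℝ) ^ (-2:ℝ) * ((1-t) ^ (1-s) * (1-t) ^ (1:ℝ)) = (1-t) ^ (-s) := by
    rw [← Real.rpow_add ha, ← Real.rpow_add ha]; congr 1; ring
  rw [Real.rpow_one] at h5
  linear_combination (t:ℝ) ^ (s-1) * h5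

lemma integrableOn_key {a : ℝ} (h0 : 0 < a) (h6 : a < 6) :
    IntegrableOn (fun x : ℝ => x ^ (a-1) / (1 + x^6)) (Ioi 0) := by
  have hcont : ContinuousOn (fun x : ℝ => x ^ (a-1) / (1 + x^6)) (Ioi 0) := by
    apply ContinuousOn.div
    · exact fun x hx => (Real.continuousAt_rpow_const x _ (Or.inl (ne_of_gt hx))).continuousWithinAt
    · fun_prop
    · intro x hx; positivity
  rw [show Ioi (0:ℝ) = Ioc 0 1 ∪ Ioi 1 by rw [Ioc_union_Ioi_eq_Ioi]; norm_num]
  apply IntegrableOn.union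
  · -- bound by x ^ (a-1)
    have hbase : IntegrableOn (fun x : ℝ => x ^ (a-1)) (Ioc 0 1) := by
      have := (intervalIntegral.intervalIntegrable_rpow' (a := 0) (b := 1) (r := a-1)
        (by linarith)).1
      simpa [intervalIntegrable_iff, uIoc_of_le (zero_le_one' ℝ)] using
        (intervalIntegral.intervalIntegrable_rpow' (a := 0) (b := 1) (r := a-1)
          (by linarith : (-1:ℝ) < a - 1))
    apply Integrable.mono' hbase
    · exact (hcont.mono (by intro x hx; exact lt_of_lt_of_le hx.1 le_rfl : Ioc (0:ℝ) 1 ⊆ Ioi 0)).aestronglyMeasurable measurableSet_Ioc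
    · filter_upwards [ae_restrict_mem measurableSet_Ioc] with x hx
      have hx0 : (0:ℝ) < x := hx.1
      rw [Real.norm_eq_abs, abs_div, abs_of_nonneg (Real.rpow_nonneg hx0.le _),
        abs_of_nonneg (by positivity : (0:ℝ) ≤ 1 + x^6)]
      rw [div_le_iff₀ (by positivity)]
      nlinarith [Real.rpow_nonneg hx0.le (a-1), pow_pos hx0 6]
  · -- bound by x ^ (a-7)
    have hbase : IntegrableOn (fun x : ℝ => x ^ (a-7)) (Ioi 1) := by
      have := integrableOn_Ioi_rpow_of_lt (by linarith : a - 7 < -1) (zero_lt_one' ℝ)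
      simpa using this
    apply Integrable.mono' hbase
    · exact (hcont.mono (by intro x hx; exact lt_trans zero_lt_one (show (1:ℝ) < x from hx))).aestronglyMeasurable measurableSet_Ioi
    · filter_upwards [ae_restrict_mem measurableSet_Ioi] with x hx
      have hx0 : (0:ℝ) < x := lt_trans zero_lt_one hx
      rw [Real.norm_eq_abs, abs_div, abs_of_nonneg (Real.rpow_nonneg hx0.le _),
        abs_of_nonneg (by positivity : (0:ℝ) ≤ 1 + x^6)]
      rw [div_le_iff₀ (by positivity), show (a:ℝ) - 7 = (a-1) + -6 by ring,
        Real.rpow_add hx0, mul_assoc]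
      have h1 : (1:ℝ) ≤ x ^ (6:ℕ) := one_le_pow₀ (le_of_lt hx)
      have h2 : x ^ (-6:ℝ) * (1 + x^6) = x ^ (-6:ℝ) + x ^ (-6:ℝ) * x ^ (6:ℕ) := by ring
      have h3 : x ^ (-6:ℝ) * x ^ (6:ℕ) = 1 := by
        rw [← Real.rpow_natCast x 6, ← Real.rpow_add hx0]; norm_num
      nlinarith [Real.rpow_nonneg hx0.le (a-1), Real.rpow_nonneg hx0.le (-6:ℝ)]

lemma key_integral {a : ℝ} (h0 : 0 < a) (h6 : a < 6) :
    ∫ x in Ioi (0:ℝ), x ^ (a-1) / (1 + x^6) = (π/6) / Real.sin (π * a / 6) := by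
  have hs0 : 0 < a / 6 := by linarith
  have hs1 : a / 6 < 1 := by linarith
  have hsub := MeasureTheory.integral_comp_rpow_Ioi
    (fun y => y ^ (a/6 - 1) / (1 + y)) (p := 6) (by norm_num)
  have heq : ∀ x ∈ Ioi (0:ℝ), (|(6:ℝ)| * x ^ ((6:ℝ) - 1)) •
      ((x ^ (6:ℝ)) ^ (a/6 - 1) / (1 + x ^ (6:ℝ))) = 6 * (x ^ (a-1) / (1 + x^6)) := by
    intro x hx
    have hx0 : (0:ℝ) < x := hx
    have e1 : (x ^ (6:ℝ)) ^ (a/6 - 1) = x ^ (a - 6) := by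
      rw [← Real.rpow_mul hx0.le]; congr 1; ring
    have e2 : x ^ (6:ℝ) = x ^ (6:ℕ) := by
      rw [show (6:ℝ) = ((6:ℕ):ℝ) by norm_num, Real.rpow_natCast]
    have e3 : x ^ ((6:ℝ)-1) = x ^ (5:ℕ) := by
      rw [show (6:ℝ)-1 = (5:ℕ) by norm_num, Real.rpow_natCast]
    have e4 : x ^ (5:ℕ) * x ^ (a-6) = x ^ (a-1) := by
      rw [← Real.rpow_natCast x 5, ← Real.rpow_add hx0]; congr 1; push_cast; ring
    rw [smul_eq_mul, e1, e3, abs_of_nonneg (by norm_num : (0:ℝ) ≤ 6)]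
    rw [e2]
    field_simp
    rw [← e4]
  rw [setIntegral_congr_fun measurableSet_Ioi heq] at hsub
  rw [MeasureTheory.integral_const_mul] at hsub
  rw [mellin_one_add (a/6) hs0 hs1, betaReal (a/6) hs0 hs1] at hsub
  have : π * (a/6) = π * a / 6 := by ring
  rw [this] at hsub
  have h : (∫ x in Ioi (0:ℝ), x ^ (a-1) / (1 + x^6)) = (π / Real.sin (π * a / 6)) / 6 := by
    linarith
  rw [h]; ring

lemma sqrt32 : Real.sqrt 3 * Real.sqrt 2 = Real.sqrt 6 := by
  rw [← Real.sqrt_mul (by norm_num : (0:ℝ) ≤ 3)]; norm_num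

lemma sin_7pi12 : Real.sin (7*π/12) = (Real.sqrt 6 + Real.sqrt 2)/4 := by
  rw [show 7*π/12 = π/3 + π/4 by ring, Real.sin_add, Real.sin_pi_div_three,
    Real.cos_pi_div_three, Real.sin_pi_div_four, Real.cos_pi_div_four]
  linear_combination sqrt32 / 4

lemma sin_5pi12 : Real.sin (5*π/12) = (Real.sqrt 6 + Real.sqrt 2)/4 := by
  rw [show 5*π/12 = π/4 + π/6 by ring, Real.sin_add, Real.sin_pi_div_six,
    Real.cos_pi_div_six, Real.sin_pi_div_four, Real.cos_pi_div_four]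
  linear_combination sqrt32 / 4

lemma sin_11pi12 : Real.sin (11*π/12) = (Real.sqrt 6 - Real.sqrt 2)/4 := by
  rw [show 11*π/12 = π - (π/3 - π/4) by ring, Real.sin_pi_sub, Real.sin_sub,
    Real.sin_pi_div_three, Real.cos_pi_div_three, Real.sin_pi_div_four, Real.cos_pi_div_four]
  linear_combination sqrt32 / 4

lemma momentFormula (p : ℝ) (hp0 : 0 < p) (hp : p < 3) (m : ℝ → ℝ)
    (hm : ∀ x, m x = 1 / (π * (x ^ 4 - x ^ 2 + 1))) :
    ∫ x : ℝ, |x| ^ p * m x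
      = 2/π * ((π/6)/Real.sin (π*(p+1)/6) + (π/6)/Real.sin (π*(p+3)/6)) := by
  set g : ℝ → ℝ := fun y => (1/π) * (y^((p+1)-1)/(1+y^6) + y^((p+3)-1)/(1+y^6)) with hg
  have hcongr : ∀ x : ℝ, |x| ^ p * m x = g |x| := by
    intro x
    rw [hm]; simp only [hg]
    rcases eq_or_ne x 0 with rfl | hx
    · simp [Real.zero_rpow hp0.ne', Real.zero_rpow (by linarith : p + 1 - 1 ≠ 0),
        Real.zero_rpow (by linarith : p + 3 - 1 ≠ 0)]
    · have hax : (0:ℝ) < |x| := abs_pos.mpr hx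
      have e2 : |x| ^ (2:ℕ) = x ^ (2:ℕ) := sq_abs x
      have e6 : |x| ^ (6:ℕ) = x ^ (6:ℕ) := by rw [pow_abs, abs_of_nonneg (by positivity : (0:ℝ) ≤ x ^ (6:ℕ))]
      have epow : |x| ^ (p+3-1) = |x| ^ p * |x| ^ (2:ℕ) := by
        rw [← Real.rpow_natCast |x| 2, ← Real.rpow_add hax]; congr 1; push_cast; ring
      have hden : (0:ℝ) < x ^ 4 - x ^ 2 + 1 := by nlinarith [sq_nonneg (x^2 - 1), sq_nonneg x]
      have hfac : (1 + x^6) = (x^2+1) * (x ^ 4 - x ^ 2 + 1) := by ring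
      have h1x : (0:ℝ) < 1 + x^6 := by positivity
      have hsimp : p + 1 - 1 = p := by ring
      rw [hsimp, epow, e6, e2]
      rw [← add_div, hfac]
      field_simp
      ring
  rw [funext hcongr, integral_comp_abs (f := g)]
  have hI1 := integrableOn_key (a := p+1) (by linarith) (by linarith)
  have hI2 := integrableOn_key (a := p+3) (by linarith) (by linarith)
  rw [hg]
  rw [MeasureTheory.integral_const_mul, MeasureTheory.integral_add hI1 hI2]
  rw [key_integral (a := p+1) (by linarith) (by linarith),
    key_integral (a := p+3) (by linarith) (by linarith)]
  ring

lemma sin_3pi4 : Real.sin (3*π/4) = Real.sqrt 2 / 2 := by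
  rw [show 3*π/4 = π - π/4 by ring, Real.sin_pi_sub, Real.sin_pi_div_four]

lemma sqrt23 : Real.sqrt (2/3) = Real.sqrt 6 / 3 := by
  rw [show (2/3:ℝ) = (Real.sqrt 6 / 3)^2 by
    rw [div_pow, Real.sq_sqrt (by norm_num : (0:ℝ) ≤ 6)]; norm_num,
    Real.sqrt_sq (by positivity)]

theorem stmt_15 (m : ℝ → ℝ) (hm : ∀ x, m x = 1 / (Real.pi * (x ^ 4 - x ^ 2 + 1))) :
    (∫ x : ℝ, |x| ^ ((1:ℝ)/2) * m x = Real.sqrt (2/3)) ∧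
    (∫ x : ℝ, |x| ^ ((3:ℝ)/2) * m x = Real.sqrt (2/3)) ∧
    (∫ x : ℝ, |x| ^ ((5:ℝ)/2) * m x = 2 * Real.sqrt (2/3)) := by
  have s2 : Real.sqrt 2 ^ 2 = 2 := Real.sq_sqrt (by norm_num)
  have s6 : Real.sqrt 6 ^ 2 = 6 := Real.sq_sqrt (by norm_num)
  have h2p : (0:ℝ) < Real.sqrt 2 := Real.sqrt_pos.mpr (by norm_num)
  have h6p : (0:ℝ) < Real.sqrt 6 := Real.sqrt_pos.mpr (by norm_num)
  have h62 : Real.sqrt 2 < Real.sqrt 6 := Real.sqrt_lt_sqrt (by norm_num) (by norm_num)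
  have hne : Real.sqrt 6 - Real.sqrt 2 ≠ 0 := by intro h; nlinarith
  have hA : (4:ℝ)/(Real.sqrt 6 + Real.sqrt 2) = Real.sqrt 6 - Real.sqrt 2 := by
    rw [div_eq_iff (by positivity)]; linear_combination s2 - s6
  have hB : (4:ℝ)/(Real.sqrt 6 - Real.sqrt 2) = Real.sqrt 6 + Real.sqrt 2 := by
    rw [div_eq_iff hne]; linear_combination s2 - s6
  have hC : (2:ℝ)/Real.sqrt 2 = Real.sqrt 2 := by
    rw [div_eq_iff h2p.ne']; linear_combination -s2
  have hD : π/6/(Real.sqrt 2/2) = π/6*Real.sqrt 2 := by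
    rw [div_div_eq_mul_div, mul_div_assoc, hC]
  have hE : π/6/((Real.sqrt 6 + Real.sqrt 2)/4) = π/6*(Real.sqrt 6 - Real.sqrt 2) := by
    rw [div_div_eq_mul_div, mul_div_assoc, hA]
  have hF : π/6/((Real.sqrt 6 - Real.sqrt 2)/4) = π/6*(Real.sqrt 6 + Real.sqrt 2) := by
    rw [div_div_eq_mul_div, mul_div_assoc, hB]
  refine ⟨?_, ?_, ?_⟩
  · rw [momentFormula _ (by norm_num) (by norm_num) m hm,
      show π * ((1:ℝ)/2 + 1) / 6 = π/4 by ring, show π * ((1:ℝ)/2 + 3) / 6 = 7*π/12 by ring,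
      Real.sin_pi_div_four, sin_7pi12, sqrt23, hD, hE]
    field_simp
    ring
  · rw [momentFormula _ (by norm_num) (by norm_num) m hm,
      show π * ((3:ℝ)/2 + 1) / 6 = 5*π/12 by ring, show π * ((3:ℝ)/2 + 3) / 6 = 3*π/4 by ring,
      sin_5pi12, sin_3pi4, sqrt23, hD, hE]
    field_simp
    ring
  · rw [momentFormula _ (by norm_num) (by norm_num) m hm,
      show π * ((5:ℝ)/2 + 1) / 6 = 7*π/12 by ring, show π * ((5:ℝ)/2 + 3) / 6 = 11*π/12 by ring,
      sin_7pi12, sin_11pi12, sqrt23, hE, hF]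
    field_simp
    ring
end

section
/- Let p > q > 0, κ > 1, χ > 0, ε ∈ (0, p+κ−1−p_X), and p ≤ p_X < p+κ−1. Define δ̄(q) = min((p−q)/χ, q/2, 1) and γ(q,ε) = (p+κ−1−p_X−ε)/(p+κ−1−q−ε). Then sup over q ∈ (0,p) and ε of δ̄(q)·γ(q,ε) equals (p/(2+χ))·(p+κ−1−p_X)/(p+κ−1−2p/(2+χ)) when p ≤ χ+2, and equals (p+κ−1−p_X)/(κ+χ−1) when p > χ+2, attained at q* = 2p/(2+χ) and q* = p−χ respectively. -/
open Real

set_option maxHeartbeats 1000000 in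
theorem stmt_19 (p κ χ p_X : ℝ)
    (hp : 0 < p) (hκ : 1 < κ) (hχ : 0 < χ)
    (hpX₁ : p ≤ p_X) (hpX₂ : p_X < p + κ - 1)
    (δbar : ℝ → ℝ) (hδbar : ∀ q, δbar q = min (min ((p - q) / χ) (q / 2)) 1)
    (γ : ℝ → ℝ → ℝ)
    (hγ : ∀ q ε, γ q ε = (p + κ - 1 - p_X - ε) / (p + κ - 1 - q - ε))
    (qstar : ℝ) (hqstar : qstar = if p ≤ χ + 2 then 2 * p / (2 + χ) else p - χ) :
    sSup {v : ℝ | ∃ q ∈ Set.Ioo 0 p, ∃ ε ∈ Set.Ioo 0 (p + κ - 1 - p_X),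
        v = δbar q * γ q ε} =
      (if p ≤ χ + 2 then
        p / (2 + χ) * ((p + κ - 1 - p_X) / (p + κ - 1 - 2 * p / (2 + χ)))
      else (p + κ - 1 - p_X) / (κ + χ - 1)) ∧
    sSup {v : ℝ | ∃ q ∈ Set.Ioo 0 p, ∃ ε ∈ Set.Ioo 0 (p + κ - 1 - p_X),
        v = δbar q * γ q ε} =
      δbar qstar * ((p + κ - 1 - p_X) / (p + κ - 1 - qstar)) := by
  have hE : 0 < p + κ - 1 - p_X := by linarith
  have h2χ : (0:ℝ) < 2 + χ := by linarith
  have hq1 : 0 < qstar := by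
    rw [hqstar]; split_ifs with h
    · positivity
    · linarith
  have hq2 : qstar < p := by
    rw [hqstar]; split_ifs with h
    · rw [div_lt_iff₀ h2χ]; nlinarith
    · linarith
  have hδs : δbar qstar = if p ≤ χ + 2 then p / (2 + χ) else 1 := by
    rw [hδbar, hqstar]; split_ifs with h
    · have e1 : (p - 2 * p / (2 + χ)) / χ = p / (2 + χ) := by
        field_simp; ring
      have e2 : (2 * p / (2 + χ)) / 2 = p / (2 + χ) := by ring
      rw [e1, e2, min_self]
      exact min_eq_left (by rw [div_le_one h2χ]; linarith)
    · have e1 : (p - (p - χ)) / χ = 1 := by field_simp; ring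
      rw [e1, min_eq_left (by linarith : (1:ℝ) ≤ (p - χ) / 2), min_self]
  have hδspos : 0 < δbar qstar := by
    rw [hδs]; split_ifs with h
    · positivity
    · norm_num
  have hDq : 0 < p + κ - 1 - qstar := by linarith
  have hED : p + κ - 1 - p_X < p + κ - 1 - qstar := by linarith
  have hmain : sSup {v : ℝ | ∃ q ∈ Set.Ioo 0 p, ∃ ε ∈ Set.Ioo 0 (p + κ - 1 - p_X),
        v = δbar q * γ q ε} =
      δbar qstar * ((p + κ - 1 - p_X) / (p + κ - 1 - qstar)) := by
    apply csSup_eq_of_forall_le_of_forall_lt_exists_gt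
    · exact ⟨δbar qstar * γ qstar ((p + κ - 1 - p_X)/2), qstar, ⟨hq1, hq2⟩,
        (p + κ - 1 - p_X)/2, ⟨by linarith, by linarith⟩, rfl⟩
    · rintro v ⟨q, ⟨hq0, hqp⟩, ε, ⟨hε0, hεE⟩, rfl⟩
      have hKq : 0 < p + κ - 1 - q := by linarith
      have hKqε : 0 < p + κ - 1 - q - ε := by linarith
      have hd0 : 0 ≤ δbar q := by
        rw [hδbar]
        have h1 : 0 ≤ (p - q) / χ := div_nonneg (by linarith) hχ.le
        have h2 : 0 ≤ q / 2 := by linarith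
        exact le_min (le_min h1 h2) (by norm_num)
      have hdA : δbar q ≤ (p - q) / χ := by
        rw [hδbar]; exact le_trans (min_le_left _ _) (min_le_left _ _)
      have hd1 : δbar q * χ ≤ p - q := (le_div_iff₀ hχ).mp hdA
      have hd2 : δbar q ≤ q / 2 := by
        rw [hδbar]; exact le_trans (min_le_left _ _) (min_le_right _ _)
      have hd3 : δbar q ≤ 1 := by
        rw [hδbar]; exact min_le_right _ _
      -- key inequality: δbar q * (K - qstar) ≤ δbar qstar * (K - q)
      have hkey : δbar q * (p + κ - 1 - qstar) ≤ δbar qstar * (p + κ - 1 - q) := by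
        rw [hδs, hqstar]; split_ifs with h
        · set a : ℝ := 2 * p / (2 + χ) with ha0
          have ha : a * (2 + χ) = 2 * p := by rw [ha0]; field_simp
          have hap : a < p := by rw [ha0, div_lt_iff₀ h2χ]; nlinarith
          have haq : p / (2 + χ) = a / 2 := by rw [ha0]; ring
          rw [haq]
          rcases le_or_gt q a with hqa | hqa
          · nlinarith [mul_nonneg (by linarith : (0:ℝ) ≤ q - 2 * δbar q)
                (by linarith : (0:ℝ) ≤ p + κ - 1 - a),
              mul_nonneg (by nlinarith : (0:ℝ) ≤ a) (by linarith : (0:ℝ) ≤ a - q)]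
          · nlinarith [mul_nonneg (by linarith : (0:ℝ) ≤ p - q - δbar q * χ)
                (by linarith : (0:ℝ) ≤ p + κ - 1 - a),
              mul_nonneg (by linarith : (0:ℝ) ≤ q - a) (by linarith : (0:ℝ) ≤ κ - 1),
              mul_nonneg hd0 (by linarith : (0:ℝ) ≤ p + κ - 1 - a)]
        · push_neg at h
          rcases le_or_gt q (p - χ) with hqa | hqa
          · nlinarith [mul_nonneg (by linarith : (0:ℝ) ≤ 1 - δbar q)
                (by linarith : (0:ℝ) ≤ p + κ - 1 - (p - χ))]
          · nlinarith [mul_nonneg (by linarith : (0:ℝ) ≤ p - q - δbar q * χ)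
                (by linarith : (0:ℝ) ≤ p + κ - 1 - (p - χ)),
              mul_nonneg (by linarith : (0:ℝ) ≤ χ - (p - q))
                (by linarith : (0:ℝ) ≤ κ - 1)]
      have h1 : γ q ε ≤ (p + κ - 1 - p_X) / (p + κ - 1 - q) := by
        rw [hγ, div_le_div_iff₀ hKqε hKq]
        nlinarith [mul_nonneg hε0.le (by linarith : (0:ℝ) ≤ p_X - q)]
      have h2 : δbar q * ((p + κ - 1 - p_X) / (p + κ - 1 - q)) ≤
          δbar qstar * ((p + κ - 1 - p_X) / (p + κ - 1 - qstar)) := by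
        rw [← mul_div_assoc, ← mul_div_assoc, div_le_div_iff₀ hKq hDq]
        nlinarith [mul_le_mul_of_nonneg_right hkey hE.le]
      calc δbar q * γ q ε ≤ δbar q * ((p + κ - 1 - p_X) / (p + κ - 1 - q)) :=
            mul_le_mul_of_nonneg_left h1 hd0
        _ ≤ _ := h2
    · intro w hw
      set E : ℝ := p + κ - 1 - p_X with hEdef
      set D : ℝ := p + κ - 1 - qstar with hDdef
      set δs : ℝ := δbar qstar with hδsdef
      set ε : ℝ := min (E / 2) ((δs * ((E) / D) - w) * D / (2 * δs)) with hεdef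
      have hMw : 0 < δs * (E / D) - w := by linarith
      have hε0 : 0 < ε := by
        apply lt_min (by linarith)
        positivity
      have hεE : ε < E := lt_of_le_of_lt (min_le_left _ _) (by linarith)
      have hDε : 0 < D - ε := by linarith
      refine ⟨δbar qstar * γ qstar ε, ⟨qstar, ⟨hq1, hq2⟩, ε, ⟨hε0, hεE⟩, rfl⟩, ?_⟩
      rw [hγ]
      have hge : (E - ε) / D ≤ (E - ε) / (D - ε) := by
        rw [div_le_div_iff₀ hDq hDε]
        nlinarith [mul_nonneg (by linarith : (0:ℝ) ≤ E - ε) hε0.le]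
      have hεle : ε * (2 * δs) ≤ (δs * (E / D) - w) * D := by
        have := min_le_right (E / 2) ((δs * (E / D) - w) * D / (2 * δs))
        rw [← hεdef] at this
        exact (le_div_iff₀ (by positivity)).mp this
      have hD0 : D ≠ 0 := ne_of_gt hDq
      have hME : (δs * (E / D)) * D = δs * E := by field_simp
      have hεD : δs * ε * 2 ≤ δs * E - w * D := by
        calc δs * ε * 2 = ε * (2 * δs) := by ring
          _ ≤ (δs * (E / D) - w) * D := hεle
          _ = δs * E - w * D := by field_simp
      have hwD : w * D < δs * E := by
        have := mul_lt_mul_of_pos_right hw hDq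
        rwa [hME] at this
      have hstep : w < δs * ((E - ε) / D) := by
        rw [← mul_div_assoc, lt_div_iff₀ hDq]
        nlinarith [hεD, hwD, mul_pos hδspos hε0]
      have : δs * ((E - ε) / D) ≤ δs * ((E - ε) / (D - ε)) :=
        mul_le_mul_of_nonneg_left hge hδspos.le
      have hfin : w < δs * ((E - ε) / (D - ε)) := lt_of_lt_of_le hstep this
      have heq : (p + κ - 1 - p_X - ε) / (p + κ - 1 - qstar - ε) = (E - ε) / (D - ε) := by
        rw [hEdef, hDdef]
      rw [heq]
      exact hfin
  refine ⟨?_, hmain⟩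
  rw [hmain, hδs, hqstar]
  split_ifs with h
  · rfl
  · rw [one_mul]
    congr 1
    ring
end
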